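/- Let C be a model category satisfying the Realization Axiom and sC its simplicial objects with the Reedy model structure. A map in sC is a Reedy trivial fibration if and only if it is an equifibered Reedy fibration that is also a realization weak equivalence. -/

import Mathlib

open CategoryTheory Limits Simplicial Opposite

universe v u

/-- A retract of a morphism `g` in the arrow category. -/
def IsRetractOf {C : Type u} [Category.{v} C] {X Y Z W : C}
    (f : X ⟶ Y) (g : Z ⟶ W) : Prop :=
  ∃ (i : X ⟶ Z) (r : Z ⟶ X) (j : Y ⟶ W) (s : W ⟶ Y),
    i ≫ r = 𝟙 X ∧ j ≫ s = 𝟙 Y ∧ i ≫ g = f ≫ j ∧ g ≫ s = r ≫ f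

/-- A (Quillen) model structure on a category `C`: three classes of morphisms,
weak equivalences, cofibrations and fibrations, satisfying the two-out-of-three
axiom, closure under retracts, the lifting axioms and the factorization axioms. -/
structure ModelStructure (C : Type u) [Category.{v} C] where
  W : MorphismProperty C
  Cof : MorphismProperty C
  Fib : MorphismProperty C
  w_of_isos : ∀ {X Y : C} (f : X ⟶ Y), IsIso f → W f
  w_comp : ∀ {X Y Z : C} (f : X ⟶ Y) (g : Y ⟶ Z), W f → W g → W (f ≫ g)
  w_cancel_left : ∀ {X Y Z : C} (f : X ⟶ Y) (g : Y ⟶ Z), W f → W (f ≫ g) → W g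
  w_cancel_right : ∀ {X Y Z : C} (f : X ⟶ Y) (g : Y ⟶ Z), W g → W (f ≫ g) → W f
  w_retract : ∀ {X Y Z W' : C} (f : X ⟶ Y) (g : Z ⟶ W'), IsRetractOf f g → W g → W f
  cof_retract : ∀ {X Y Z W' : C} (f : X ⟶ Y) (g : Z ⟶ W'), IsRetractOf f g → Cof g → Cof f
  fib_retract : ∀ {X Y Z W' : C} (f : X ⟶ Y) (g : Z ⟶ W'), IsRetractOf f g → Fib g → Fib f
  lift_triv_cof : ∀ {A B X Y : C} (i : A ⟶ B) (p : X ⟶ Y),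
    Cof i → W i → Fib p → HasLiftingProperty i p
  lift_triv_fib : ∀ {A B X Y : C} (i : A ⟶ B) (p : X ⟶ Y),
    Cof i → Fib p → W p → HasLiftingProperty i p
  fact_cof_trivFib : ∀ {X Y : C} (f : X ⟶ Y),
    ∃ (Z : C) (i : X ⟶ Z) (p : Z ⟶ Y), Cof i ∧ Fib p ∧ W p ∧ i ≫ p = f
  fact_trivCof_fib : ∀ {X Y : C} (f : X ⟶ Y),
    ∃ (Z : C) (i : X ⟶ Z) (p : Z ⟶ Y), Cof i ∧ W i ∧ Fib p ∧ i ≫ p = f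

namespace ModelStructure

variable {C : Type u} [Category.{v} C] (M : ModelStructure C)

/-- An object is cofibrant if the map from the initial object is a cofibration. -/
def Cofibrant [HasInitial C] (A : C) : Prop := M.Cof (initial.to A)

/-- An object is fibrant if the map to the terminal object is a fibration. -/
def Fibrant [HasTerminal C] (X : C) : Prop := M.Fib (terminal.from X)

/-- Left properness: the pushout of a weak equivalence along a cofibration is a
weak equivalence. -/
def LeftProper : Prop :=
  ∀ ⦃Z X Y P : C⦄ (f : Z ⟶ X) (g : Z ⟶ Y) (h : X ⟶ P) (k : Y ⟶ P),
    IsPushout f g h k → M.W f → M.Cof g → M.W k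

/-- Right properness: the pullback of a weak equivalence along a fibration is a
weak equivalence. -/
def RightProper : Prop :=
  ∀ ⦃P X Y Z : C⦄ (h : P ⟶ X) (k : P ⟶ Y) (f : X ⟶ Z) (g : Y ⟶ Z),
    IsPullback h k f g → M.W f → M.Fib g → M.W h

end ModelStructure
section Core1
open CategoryTheory Limits Simplicial Opposite

variable (C : Type u) [Category.{v} C]

/-- The constant simplicial object functor `c : C ⥤ sC`. -/
abbrev constSimp : C ⥤ SimplicialObject C := Functor.const _

/-- Evaluation at simplicial degree zero, `Ev : sC ⥤ C`. -/
abbrev ev0 : SimplicialObject C ⥤ C := (evaluation _ _).obj (op (⦋0⦌ : SimplexCategory))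

variable {C}

/-- The class of level weak equivalences in `sC` relative to a model structure on `C`. -/
def levelWE (M : ModelStructure C) : MorphismProperty (SimplicialObject C) :=
  fun _ _ f => ∀ Δ : SimplexCategoryᵒᵖ, M.W (f.app Δ)

/-- An object of `sC` is homotopically constant if all its simplicial face and
degeneracy operators are weak equivalences in `C`. -/
def HomotopicallyConstant (M : ModelStructure C) (X : SimplicialObject C) : Prop :=
  (∀ (n : ℕ) (i : Fin (n + 2)), M.W (X.δ i)) ∧ ∀ (n : ℕ) (i : Fin (n + 1)), M.W (X.σ i)

end Core1

section Matching
open CategoryTheory Limits Simplicial Opposite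

variable {C : Type u} [Category.{v} C] [HasLimitsOfSize.{0,0} C] [HasColimitsOfSize.{0,0} C]

/-- The matching category of `[n]`: surjections `[n] → [j]` in `Δᵒᵖ` (i.e. maps
`op ⦋n⦌ ⟶ op ⦋j⦌` that are epimorphisms in `Δᵒᵖ`) with `j < n`. -/
def MatchingCat (n : ℕ) : Type :=
  ObjectProperty.FullSubcategory (fun u : Under (op (⦋n⦌ : SimplexCategory)) =>
    u.right.unop.len < n ∧ Epi u.hom)

instance (n : ℕ) : Category (MatchingCat n) := by
  dsimp [MatchingCat]; infer_instance

/-- The diagram over the matching category associated to a simplicial object. -/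
def matchingDiagram (n : ℕ) (X : SimplicialObject C) : MatchingCat n ⥤ C :=
  ObjectProperty.ι _ ⋙ Under.forget _ ⋙ X

/-- The `n`-th matching object `M_n X` of a simplicial object `X`. -/
noncomputable def matchingObject (n : ℕ) (X : SimplicialObject C) : C :=
  limit (matchingDiagram n X)

/-- The canonical map `X_n ⟶ M_n X`. -/
noncomputable def matchingMap (n : ℕ) (X : SimplicialObject C) :
    X.obj (op ⦋n⦌) ⟶ matchingObject n X :=
  limit.lift (matchingDiagram n X)
    { pt := X.obj (op ⦋n⦌)
      π :=
        { app := fun u => X.map u.obj.hom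
          naturality := fun u v m => by
            dsimp [matchingDiagram]
            erw [Category.id_comp, ← X.map_comp]
            exact congrArg X.map (Under.w ((ObjectProperty.ι _).map m)).symm } }

/-- The map `M_n X ⟶ M_n Y` induced by a map `f : X ⟶ Y` in `sC`. -/
noncomputable def matchingObjMap (n : ℕ) {X Y : SimplicialObject C} (f : X ⟶ Y) :
    matchingObject n X ⟶ matchingObject n Y :=
  limMap (Functor.whiskerLeft (ObjectProperty.ι _ ⋙ Under.forget _) f)

lemma matching_comm (n : ℕ) {X Y : SimplicialObject C} (f : X ⟶ Y) :
    f.app (op ⦋n⦌) ≫ matchingMap n Y = matchingMap n X ≫ matchingObjMap n f := by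
  apply limit.hom_ext
  intro u
  erw [Category.assoc, Category.assoc]
  dsimp only [matchingMap, matchingObjMap]
  erw [limit.lift_π, limMap_π, limit.lift_π_assoc]
  exact (f.naturality _).symm

/-- The relative matching map `X_n ⟶ Y_n ×_{M_n Y} M_n X` of a map `f : X ⟶ Y`. -/
noncomputable def relMatchingMap (n : ℕ) {X Y : SimplicialObject C} (f : X ⟶ Y) :
    X.obj (op ⦋n⦌) ⟶ pullback (matchingMap n Y) (matchingObjMap n f) :=
  pullback.lift (f.app (op ⦋n⦌)) (matchingMap n X) (matching_comm n f)

/-- A map in `sC` is a Reedy fibration if all its relative matching maps are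
fibrations in `C`. -/
def ReedyFibration (M : ModelStructure C) {X Y : SimplicialObject C} (f : X ⟶ Y) : Prop :=
  ∀ n : ℕ, M.Fib (relMatchingMap n f)

/-- An object `X` of `sC` is Reedy fibrant if all its matching maps `X_n ⟶ M_n X`
are fibrations in `C`. -/
def ReedyFibrantObj (M : ModelStructure C) (X : SimplicialObject C) : Prop :=
  ∀ n : ℕ, M.Fib (matchingMap n X)

end Matching

section Latching
open CategoryTheory Limits Simplicial Opposite

variable {C : Type u} [Category.{v} C] [HasLimitsOfSize.{0,0} C] [HasColimitsOfSize.{0,0} C]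

/-- The latching category of `[n]`: injections `[j] → [n]` in `Δᵒᵖ` (i.e. maps
`op ⦋j⦌ ⟶ op ⦋n⦌` that are monomorphisms in `Δᵒᵖ`) with `j < n`. -/
def LatchingCat (n : ℕ) : Type :=
  ObjectProperty.FullSubcategory (fun u : Over (op (⦋n⦌ : SimplexCategory)) =>
    u.left.unop.len < n ∧ Mono u.hom)

instance (n : ℕ) : Category (LatchingCat n) := by
  dsimp [LatchingCat]; infer_instance

/-- The diagram over the latching category associated to a simplicial object. -/
def latchingDiagram (n : ℕ) (X : SimplicialObject C) : LatchingCat n ⥤ C :=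
  ObjectProperty.ι _ ⋙ Over.forget _ ⋙ X

/-- The `n`-th latching object `L_n X` of a simplicial object `X`. -/
noncomputable def latchingObject (n : ℕ) (X : SimplicialObject C) : C :=
  colimit (latchingDiagram n X)

/-- The canonical map `L_n X ⟶ X_n`. -/
noncomputable def latchingMap (n : ℕ) (X : SimplicialObject C) :
    latchingObject n X ⟶ X.obj (op ⦋n⦌) :=
  colimit.desc (latchingDiagram n X)
    { pt := X.obj (op ⦋n⦌)
      ι :=
        { app := fun u => X.map u.obj.hom
          naturality := fun u v m => by
            dsimp [latchingDiagram]
            erw [Category.comp_id, ← X.map_comp]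
            exact congrArg X.map (Over.w ((ObjectProperty.ι _).map m)) } }

/-- The map `L_n X ⟶ L_n Y` induced by a map `f : X ⟶ Y` in `sC`. -/
noncomputable def latchingObjMap (n : ℕ) {X Y : SimplicialObject C} (f : X ⟶ Y) :
    latchingObject n X ⟶ latchingObject n Y :=
  colimMap (Functor.whiskerLeft (ObjectProperty.ι _ ⋙ Over.forget _) f)

lemma latching_comm (n : ℕ) {X Y : SimplicialObject C} (f : X ⟶ Y) :
    latchingObjMap n f ≫ latchingMap n Y = latchingMap n X ≫ f.app (op ⦋n⦌) := by
  apply colimit.hom_ext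
  intro u
  simp only [latchingMap, latchingObjMap, latchingDiagram]
  erw [ι_colimMap_assoc, colimit.ι_desc, colimit.ι_desc_assoc]
  exact (f.naturality _).symm

/-- The relative latching map `X_n ⊔_{L_n X} L_n Y ⟶ Y_n` of a map `f : X ⟶ Y`. -/
noncomputable def relLatchingMap (n : ℕ) {X Y : SimplicialObject C} (f : X ⟶ Y) :
    pushout (latchingMap n X) (latchingObjMap n f) ⟶ Y.obj (op ⦋n⦌) :=
  pushout.desc (f.app (op ⦋n⦌)) (latchingMap n Y) (latching_comm n f).symm

/-- A map in `sC` is a Reedy cofibration if all its relative latching maps are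
cofibrations in `C`. -/
def ReedyCofibration (M : ModelStructure C) {X Y : SimplicialObject C} (f : X ⟶ Y) : Prop :=
  ∀ n : ℕ, M.Cof (relLatchingMap n f)

end Latching
section Instances
open CategoryTheory Limits

instance simplicialObjectHasLimits {C : Type u} [Category.{v} C]
    [HasLimitsOfSize.{0,0} C] : HasLimitsOfSize.{0,0} (SimplicialObject C) := by
  dsimp [SimplicialObject]; infer_instance

instance simplicialObjectHasColimits {C : Type u} [Category.{v} C]
    [HasColimitsOfSize.{0,0} C] : HasColimitsOfSize.{0,0} (SimplicialObject C) := by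
  dsimp [SimplicialObject]; infer_instance

end Instances
section Equifibered
open CategoryTheory Limits Simplicial Opposite

variable {C : Type u} [Category.{v} C] [HasLimitsOfSize.{0,0} C] [HasColimitsOfSize.{0,0} C]

/-- The map `X_{m+1} ⟶ X_m ×_{Y_m} Y_{m+1}` induced by the face operator `d_i`
and a map `f : X ⟶ Y` in `sC`. -/
noncomputable def equifiberedMap {X Y : SimplicialObject C} (f : X ⟶ Y)
    (m : ℕ) (i : Fin (m + 2)) :
    X.obj (op ⦋m + 1⦌) ⟶ pullback (f.app (op ⦋m⦌)) (Y.δ i) :=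
  pullback.lift (X.δ i) (f.app (op ⦋m + 1⦌)) (f.naturality (SimplexCategory.δ i).op)

/-- A Reedy fibration `f : X ⟶ Y` is equifibered if all the maps
`X_{m+1} ⟶ X_m ×_{Y_m} Y_{m+1}` induced by face operators are weak equivalences. -/
def EquifiberedReedyFibration (M : ModelStructure C) {X Y : SimplicialObject C}
    (f : X ⟶ Y) : Prop :=
  ReedyFibration M f ∧ ∀ (m : ℕ) (i : Fin (m + 2)), M.W (equifiberedMap f m i)

end Equifibered

section Realization
open CategoryTheory Limits Simplicial Opposite

variable {C : Type u} [Category.{v} C]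

/-- The hom-sets `[A, B]^{HR}` in the homotopy category of the Reedy model
structure on `sC`, realized as the localization of `sC` at the level weak
equivalences. -/
noncomputable abbrev reedyHo (M : ModelStructure C) :
    SimplicialObject C ⥤ (levelWE M).Localization :=
  (levelWE M).Q

/-- A map `f` in `sC` is a realization weak equivalence if for every `Z` in `C`
it induces a bijection `[B, cZ]^{HR} → [A, cZ]^{HR}` on homotopy classes of maps
into constant objects in the Reedy homotopy category. -/
def RealizationWE (M : ModelStructure C) {A B : SimplicialObject C} (f : A ⟶ B) : Prop :=
  ∀ Z : C, Function.Bijective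
    (fun g : (reedyHo M).obj B ⟶ (reedyHo M).obj ((constSimp C).obj Z) =>
      (reedyHo M).map f ≫ g)

variable [HasLimitsOfSize.{0,0} C] [HasColimitsOfSize.{0,0} C]

/-- The Realization Axiom: every equifibered Reedy fibration which is a
realization weak equivalence is a level weak equivalence. -/
def RealizationAxiom (M : ModelStructure C) : Prop :=
  ∀ ⦃X Y : SimplicialObject C⦄ (f : X ⟶ Y),
    EquifiberedReedyFibration M f → RealizationWE M f → levelWE M f

end Realization

section Canonical
open CategoryTheory Limits Simplicial Opposite

variable {C : Type u} [Category.{v} C] [HasLimitsOfSize.{0,0} C] [HasColimitsOfSize.{0,0} C]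

/-- A model structure `N` on `sC` is the canonical one (relative to a model
structure `M` on `C`) if every level weak equivalence is a weak equivalence, the
cofibrations are exactly the Reedy cofibrations, and the fibrant objects are
exactly the homotopically constant Reedy fibrant objects. -/
def IsCanonical [HasTerminal (SimplicialObject C)] (M : ModelStructure C)
    (N : ModelStructure (SimplicialObject C)) : Prop :=
  (∀ ⦃X Y : SimplicialObject C⦄ (f : X ⟶ Y), levelWE M f → N.W f) ∧
  (∀ ⦃X Y : SimplicialObject C⦄ (f : X ⟶ Y), N.Cof f ↔ ReedyCofibration M f) ∧
  (∀ X : SimplicialObject C, N.Fibrant X ↔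
    (HomotopicallyConstant M X ∧ ReedyFibrantObj M X))

end Canonical

section AuxRLP
open CategoryTheory Limits Simplicial Opposite

variable {C : Type u} [Category.{v} C]

/-- The class of maps with the right lifting property against all cofibrations. -/
def RLPCof (M : ModelStructure C) {A B : C} (p : A ⟶ B) : Prop :=
  ∀ ⦃P Q : C⦄ (i : P ⟶ Q), M.Cof i → HasLiftingProperty i p

lemma rlpCof_of_trivFib (M : ModelStructure C) {A B : C} {p : A ⟶ B}
    (h1 : M.Fib p) (h2 : M.W p) : RLPCof M p :=
  fun _ _ i hi => M.lift_triv_fib i p hi h1 h2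

lemma trivFib_of_rlpCof (M : ModelStructure C) {A B : C} {p : A ⟶ B}
    (h : RLPCof M p) : M.Fib p ∧ M.W p := by
  obtain ⟨Z, i, q, hi, hq, hwq, hfac⟩ := M.fact_cof_trivFib p
  have : HasLiftingProperty i p := h i hi
  have sq : CommSq (𝟙 A) i p q := ⟨by simp [← hfac]⟩
  have hret : IsRetractOf p q :=
    ⟨i, sq.lift, 𝟙 B, 𝟙 B, sq.fac_left, by simp, by simp [hfac], by simp [sq.fac_right]⟩
  exact ⟨M.fib_retract p q hret hq, M.w_retract p q hret hwq⟩

lemma rlpCof_comp (M : ModelStructure C) {A B D : C} {p : A ⟶ B} {q : B ⟶ D}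
    (hp : RLPCof M p) (hq : RLPCof M q) : RLPCof M (p ≫ q) := by
  intro P Q i hi
  have := hp i hi
  have := hq i hi
  infer_instance

lemma rlpCof_of_isIso (M : ModelStructure C) {A B : C} (p : A ⟶ B) [IsIso p] :
    RLPCof M p := fun _ _ i _ => inferInstance

/-- `pullback.fst` of a map in `RLPCof` is in `RLPCof`. -/
lemma rlpCof_pullback_fst (M : ModelStructure C) {E B' Y' : C} (f : Y' ⟶ B') (g : E ⟶ B')
    [HasPullback f g] (hg : RLPCof M g) : RLPCof M (pullback.fst f g) := by
  intro P Q i hi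
  have := hg i hi
  constructor
  intro a b sq
  have sq' : CommSq (a ≫ pullback.snd f g) i g (b ≫ f) :=
    ⟨by rw [Category.assoc, ← pullback.condition, ← Category.assoc, sq.w, Category.assoc]⟩
  exact ⟨⟨⟨pullback.lift b sq'.lift sq'.fac_right.symm,
    by
      apply pullback.hom_ext
      · simp only [Category.assoc]; erw [pullback.lift_fst]; exact sq.w.symm
      · simp only [Category.assoc]; erw [pullback.lift_snd]; exact sq'.fac_left,
    by erw [pullback.lift_fst]⟩⟩⟩

/-- `pullback.snd` of a map in `RLPCof` is in `RLPCof`. -/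
lemma rlpCof_pullback_snd (M : ModelStructure C) {E B' Y' : C} (f : E ⟶ B') (g : Y' ⟶ B')
    [HasPullback f g] (hf : RLPCof M f) : RLPCof M (pullback.snd f g) := by
  intro P Q i hi
  have := hf i hi
  constructor
  intro a b sq
  have sq' : CommSq (a ≫ pullback.fst f g) i f (b ≫ g) :=
    ⟨by rw [Category.assoc, pullback.condition, ← Category.assoc, sq.w, Category.assoc]⟩
  exact ⟨⟨⟨pullback.lift sq'.lift b sq'.fac_right,
    by
      apply pullback.hom_ext
      · simp only [Category.assoc]; erw [pullback.lift_fst]; exact sq'.fac_left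
      · simp only [Category.assoc]; erw [pullback.lift_snd]; exact sq.w.symm,
    by erw [pullback.lift_snd]⟩⟩⟩

end AuxRLP
section AuxMatch
open CategoryTheory Limits Simplicial Opposite

variable {C : Type u} [Category.{v} C] [HasLimitsOfSize.{0,0} C] [HasColimitsOfSize.{0,0} C]

lemma MatchingCat.obj_ext {n : ℕ} (u v : MatchingCat n) (h : u.obj = v.obj) : u = v := by
  cases u; cases v; cases h; rfl

/-- The object of the matching category given by a monomorphism. -/
def matchObj (n j : ℕ) (hj : j < n) (φ : (⦋j⦌ : SimplexCategory) ⟶ ⦋n⦌) (hφ : Mono φ) :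
    MatchingCat n :=
  ⟨Under.mk φ.op, by
    refine ⟨by simpa using hj, ?_⟩
    haveI := hφ
    simpa using (inferInstance : Epi φ.op)⟩

/-- The morphism of the matching category given by a factorization. -/
def matchHom (n j k : ℕ) (hj : j < n) (hk : k < n) (φ : (⦋j⦌ : SimplexCategory) ⟶ ⦋n⦌)
    (hφ : Mono φ) (ψ : (⦋k⦌ : SimplexCategory) ⟶ ⦋j⦌) (hc : Mono (ψ ≫ φ)) :
    matchObj n j hj φ hφ ⟶ matchObj n k hk (ψ ≫ φ) hc :=
  ObjectProperty.homMk (Under.homMk ψ.op (by simp [matchObj, ← op_comp]))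

lemma pi_matchHom (n j k : ℕ) (hj : j < n) (hk : k < n) (φ : (⦋j⦌ : SimplexCategory) ⟶ ⦋n⦌)
    (hφ : Mono φ) (ψ : (⦋k⦌ : SimplexCategory) ⟶ ⦋j⦌) (hc : Mono (ψ ≫ φ))
    (Z : SimplicialObject C) :
    limit.π (matchingDiagram n Z) (matchObj n j hj φ hφ) ≫ Z.map ψ.op =
      limit.π (matchingDiagram n Z) (matchObj n k hk (ψ ≫ φ) hc) := by
  have := limit.w (matchingDiagram n Z) (matchHom n j k hj hk φ hφ ψ hc)
  exact this

lemma matchObj_eq {n : ℕ} (u : MatchingCat n) (hj : u.obj.right.unop.len < n)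
    (hφ : Mono u.obj.hom.unop) :
    matchObj n u.obj.right.unop.len hj u.obj.hom.unop hφ = u := by
  apply MatchingCat.obj_ext
  show Under.mk u.obj.hom.unop.op = u.obj
  rw [Quiver.Hom.op_unop]
  exact (StructuredArrow.eq_mk u.obj).symm

lemma le_of_mono_mk {j j' : ℕ} (ψ : (⦋j'⦌ : SimplexCategory) ⟶ ⦋j⦌) (hψ : Mono ψ) :
    j' ≤ j := by
  haveI := hψ
  simpa using SimplexCategory.len_le_of_mono ψ

lemma eq_id_of_mono_mk {j : ℕ} (ψ : (⦋j⦌ : SimplexCategory) ⟶ ⦋j⦌) (hψ : Mono ψ) :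
    ψ = 𝟙 _ := by
  haveI := hψ
  exact SimplexCategory.eq_id_of_mono ψ

lemma matchingMap_π {n : ℕ} (Z : SimplicialObject C) (u : MatchingCat n) :
    matchingMap n Z ≫ limit.π (matchingDiagram n Z) u = Z.map u.obj.hom := by
  exact limit.lift_π _ _

lemma matchingObjMap_π {n : ℕ} {X Y : SimplicialObject C} (f : X ⟶ Y) (u : MatchingCat n) :
    matchingObjMap n f ≫ limit.π (matchingDiagram n Y) u =
      limit.π (matchingDiagram n X) u ≫ f.app u.obj.right := by
  dsimp only [matchingObjMap]
  erw [limMap_π]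
  rfl

end AuxMatch
section AuxKey
open CategoryTheory Limits Simplicial Opposite

variable {C : Type u} [Category.{v} C] [HasLimitsOfSize.{0,0} C] [HasColimitsOfSize.{0,0} C]

lemma w_relMatchingMap_of_rlp (M : ModelStructure C) {X Y : SimplicialObject C} (f : X ⟶ Y)
    (hw : levelWE M f) (n : ℕ) (h : RLPCof M (matchingObjMap n f)) :
    M.W (relMatchingMap n f) := by
  have hfst := trivFib_of_rlpCof M
    (rlpCof_pullback_fst M (matchingMap n Y) (matchingObjMap n f) h)
  refine M.w_cancel_right _ _ hfst.2 ?_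
  rw [show relMatchingMap n f ≫ pullback.fst _ _ = f.app (op ⦋n⦌) from pullback.lift_fst _ _ _]
  exact hw _

/-- The inductive construction of a compatible family of partial lifts. -/
lemma exists_partial_family (M : ModelStructure C) {X Y : SimplicialObject C} (f : X ⟶ Y)
    (hf : ReedyFibration M f) (n : ℕ)
    (hRM : ∀ j, j < n → M.W (relMatchingMap j f))
    {A' B' : C} (i : A' ⟶ B') (hi : M.Cof i)
    (a : A' ⟶ matchingObject n X) (b : B' ⟶ matchingObject n Y)
    (sq : a ≫ matchingObjMap n f = i ≫ b) :
    ∀ k, k ≤ n → ∃ F : ∀ (j : ℕ), j < k → ∀ (φ : (⦋j⦌ : SimplexCategory) ⟶ ⦋n⦌), Mono φ →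
        (B' ⟶ X.obj (op ⦋j⦌)),
      ∀ (j : ℕ) (h1 : j < k) (φ : (⦋j⦌ : SimplexCategory) ⟶ ⦋n⦌) (hφ : Mono φ)
        (h2 : j < n),
        (i ≫ F j h1 φ hφ = a ≫ limit.π (matchingDiagram n X) (matchObj n j h2 φ hφ)) ∧
        (F j h1 φ hφ ≫ f.app (op ⦋j⦌) =
          b ≫ limit.π (matchingDiagram n Y) (matchObj n j h2 φ hφ)) ∧
        (∀ (j' : ℕ) (h1' : j' < k) (ψ : (⦋j'⦌ : SimplexCategory) ⟶ ⦋j⦌) (hψ : Mono ψ)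
          (hc : Mono (ψ ≫ φ)),
          F j h1 φ hφ ≫ X.map ψ.op = F j' h1' (ψ ≫ φ) hc) := by
  intro k
  induction k with
  | zero =>
    exact fun _ => ⟨fun j h1 => absurd h1 (Nat.not_lt_zero j),
      fun j h1 => absurd h1 (Nat.not_lt_zero j)⟩
  | succ k IHk =>
    intro hkn
    obtain ⟨F, hF⟩ := IHk (Nat.le_of_succ_le hkn)
    have Fcongr : ∀ (j₀ : ℕ) (h1 h1' : j₀ < k) (φ₁ φ₂ : (⦋j₀⦌ : SimplexCategory) ⟶ ⦋n⦌)
        (h : φ₁ = φ₂) (hφ₁ : Mono φ₁) (hφ₂ : Mono φ₂),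
        F j₀ h1 φ₁ hφ₁ = F j₀ h1' φ₂ hφ₂ := by
      intro j₀ h1 h1' φ₁ φ₂ h hφ₁ hφ₂
      cases h
      rfl
    -- construct the new lifts at any level `j ≤ k`
    have hex : ∀ (j : ℕ) (hjk : j ≤ k) (h2 : j < n) (φ : (⦋j⦌ : SimplexCategory) ⟶ ⦋n⦌)
        (hφ : Mono φ),
        ∃ l : B' ⟶ X.obj (op ⦋j⦌),
          (i ≫ l = a ≫ limit.π (matchingDiagram n X) (matchObj n j h2 φ hφ)) ∧
          (l ≫ f.app (op ⦋j⦌) = b ≫ limit.π (matchingDiagram n Y) (matchObj n j h2 φ hφ)) ∧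
          (∀ (j' : ℕ) (hj' : j' < j) (h1' : j' < k) (ψ : (⦋j'⦌ : SimplexCategory) ⟶ ⦋j⦌)
            (hψ : Mono ψ) (hc : Mono (ψ ≫ φ)),
            l ≫ X.map ψ.op = F j' h1' (ψ ≫ φ) hc) := by
      intro j hjk h2 φ hφ
      have hmono : ∀ v : MatchingCat j, Mono (v.obj.hom.unop) :=
        fun v => @unop_mono_of_epi _ _ _ _ v.obj.hom v.property.2
      have hcomp : ∀ v : MatchingCat j, Mono (v.obj.hom.unop ≫ φ) := by
        intro v
        haveI := hmono v
        haveI := hφ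
        exact mono_comp _ _
      have hlen : ∀ v : MatchingCat j, v.obj.right.unop.len < k :=
        fun v => lt_of_lt_of_le v.property.1 hjk
      have hlen' : ∀ v : MatchingCat j, v.obj.right.unop.len < n :=
        fun v => lt_trans v.property.1 h2
      -- the cone into the j-th matching object of X given by the previous stages
      let coneX : B' ⟶ matchingObject j X := limit.lift (matchingDiagram j X)
        { pt := B'
          π :=
            { app := fun v => F v.obj.right.unop.len (hlen v) (v.obj.hom.unop ≫ φ) (hcomp v)
              naturality := fun v v' g => by
                dsimp [matchingDiagram]
                erw [Category.id_comp]
                have hw' : g.hom.right.unop ≫ v.obj.hom.unop = v'.obj.hom.unop := by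
                  rw [← unop_comp, Under.w g.hom]
                have hg : Mono (g.hom.right.unop) := by
                  have : Mono (g.hom.right.unop ≫ v.obj.hom.unop) := by
                    rw [hw']; exact hmono v'
                  exact mono_of_mono _ (v.obj.hom.unop)
                have hc : Mono (g.hom.right.unop ≫ (v.obj.hom.unop ≫ φ)) := by
                  rw [← Category.assoc, hw']; exact hcomp v'
                have h3 := (hF v.obj.right.unop.len (hlen v) (v.obj.hom.unop ≫ φ) (hcomp v)
                  (hlen' v)).2.2 v'.obj.right.unop.len (hlen v') g.hom.right.unop hg hc
                rw [show X.map (g.hom.right.unop).op = X.map g.hom.right by rw [Quiver.Hom.op_unop]] at h3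
                exact (Fcongr _ (hlen v') (hlen v') _ _
                  (show v'.obj.hom.unop ≫ φ = g.hom.right.unop ≫ v.obj.hom.unop ≫ φ by
                    rw [← Category.assoc, hw']) (hcomp v') hc).trans h3.symm } }
      have hconeX : ∀ v : MatchingCat j, coneX ≫ limit.π (matchingDiagram j X) v =
          F v.obj.right.unop.len (hlen v) (v.obj.hom.unop ≫ φ) (hcomp v) :=
        fun v => limit.lift_π _ _
      -- the commutative square against the j-th relative matching map
      have hbw : (b ≫ limit.π (matchingDiagram n Y) (matchObj n j h2 φ hφ)) ≫ matchingMap j Y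
          = coneX ≫ matchingObjMap j f := by
        apply limit.hom_ext
        intro v
        erw [Category.assoc, Category.assoc, matchingMap_π, Category.assoc, matchingObjMap_π,
          ← Category.assoc coneX, hconeX]
        erw [(hF _ (hlen v) (v.obj.hom.unop ≫ φ) (hcomp v) (hlen' v)).2.1]
        rw [← pi_matchHom n j _ h2 (hlen' v) φ hφ v.obj.hom.unop (hcomp v) Y,
          Quiver.Hom.op_unop]
        rfl
      have hsq : CommSq (a ≫ limit.π (matchingDiagram n X) (matchObj n j h2 φ hφ)) i
          (relMatchingMap j f)
          (pullback.lift (b ≫ limit.π (matchingDiagram n Y) (matchObj n j h2 φ hφ)) coneX hbw) := by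
        constructor
        apply pullback.hom_ext
        · erw [Category.assoc, Category.assoc]
          erw [show relMatchingMap j f ≫ pullback.fst _ _ = f.app (op ⦋j⦌) from
            pullback.lift_fst _ _ _]
          erw [← matchingObjMap_π f (matchObj n j h2 φ hφ)]
          erw [← Category.assoc, sq, Category.assoc, Category.assoc, pullback.lift_fst]
        · erw [Category.assoc, Category.assoc]
          erw [show relMatchingMap j f ≫ pullback.snd _ _ = matchingMap j X from
            pullback.lift_snd _ _ _]
          erw [Category.assoc, pullback.lift_snd]
          apply limit.hom_ext
          intro v
          erw [Category.assoc, Category.assoc, Category.assoc]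
          erw [matchingMap_π, hconeX]
          erw [(hF _ (hlen v) (v.obj.hom.unop ≫ φ) (hcomp v) (hlen' v)).1]
          rw [← pi_matchHom n j _ h2 (hlen' v) φ hφ v.obj.hom.unop (hcomp v) X,
            Quiver.Hom.op_unop]
          rfl
      haveI : HasLiftingProperty i (relMatchingMap j f) :=
        M.lift_triv_fib i _ hi (hf j) (hRM j h2)
      haveI : hsq.HasLift := this.sq_hasLift hsq
      refine ⟨hsq.lift, hsq.fac_left, ?_, ?_⟩
      · have h5 : hsq.lift ≫ relMatchingMap j f ≫ pullback.fst _ _ =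
            (pullback.lift (b ≫ limit.π (matchingDiagram n Y) (matchObj n j h2 φ hφ)) coneX hbw)
              ≫ pullback.fst _ _ := by erw [← Category.assoc, hsq.fac_right]; rfl
        erw [pullback.lift_fst] at h5
        erw [pullback.lift_fst] at h5
        exact h5
      · intro j' hj' h1' ψ hψ hc
        have h5 : hsq.lift ≫ relMatchingMap j f ≫ pullback.snd _ _ =
            (pullback.lift (b ≫ limit.π (matchingDiagram n Y) (matchObj n j h2 φ hφ)) coneX hbw)
              ≫ pullback.snd _ _ := by erw [← Category.assoc, hsq.fac_right]; rfl
        erw [pullback.lift_snd] at h5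
        erw [pullback.lift_snd] at h5
        have h6 : hsq.lift ≫ matchingMap j X ≫ limit.π (matchingDiagram j X)
            (matchObj j j' hj' ψ hψ) = coneX ≫ limit.π (matchingDiagram j X)
            (matchObj j j' hj' ψ hψ) := by exact (Category.assoc _ _ _).symm.trans (congrArg (· ≫ _) h5)
        erw [matchingMap_π, hconeX] at h6
        exact h6
    -- package the new family
    choose L hL1 hL2 hL3 using hex
    have Lcongr : ∀ (j₀ : ℕ) (ha ha' : j₀ ≤ k) (hb hb' : j₀ < n)
        (φ₁ φ₂ : (⦋j₀⦌ : SimplexCategory) ⟶ ⦋n⦌) (h : φ₁ = φ₂) (hφ₁ : Mono φ₁) (hφ₂ : Mono φ₂),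
        L j₀ ha hb φ₁ hφ₁ = L j₀ ha' hb' φ₂ hφ₂ := by
      intro j₀ ha ha' hb hb' φ₁ φ₂ h hφ₁ hφ₂
      cases h
      rfl
    refine ⟨fun j h1 φ hφ => if h : j < k then F j h φ hφ else
      L j (by omega) (by omega) φ hφ, ?_⟩
    intro j h1 φ hφ h2
    by_cases h : j < k
    · refine ⟨?_, ?_, ?_⟩
      · simp only [dif_pos h]
        exact (hF j h φ hφ h2).1
      · simp only [dif_pos h]
        exact (hF j h φ hφ h2).2.1
      · intro j' h1' ψ hψ hc
        have hj'j : j' ≤ j := le_of_mono_mk ψ hψ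
        have h' : j' < k := by omega
        simp only [dif_pos h, dif_pos h']
        exact (hF j h φ hφ h2).2.2 j' h' ψ hψ hc
    · refine ⟨?_, ?_, ?_⟩
      · simp only [dif_neg h]
        exact hL1 j (by omega) (by omega) φ hφ
      · simp only [dif_neg h]
        exact hL2 j (by omega) (by omega) φ hφ
      · intro j' h1' ψ hψ hc
        have hj'j : j' ≤ j := le_of_mono_mk ψ hψ
        by_cases h' : j' < j
        · have h'' : j' < k := by omega
          simp only [dif_neg h, dif_pos h'']
          exact hL3 j (by omega) (by omega) φ hφ j' h' h'' ψ hψ hc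
        · have : j' = j := by omega
          subst this
          have hid := eq_id_of_mono_mk ψ hψ
          subst hid
          simp only [dif_neg h]
          rw [op_id, CategoryTheory.Functor.map_id, Category.comp_id]
          exact Lcongr _ _ _ _ _ _ _ (Category.id_comp φ).symm _ _

lemma rlpCof_matchingObjMap (M : ModelStructure C) {X Y : SimplicialObject C} (f : X ⟶ Y)
    (hf : ReedyFibration M f) (hw : levelWE M f) :
    ∀ n, RLPCof M (matchingObjMap n f) := by
  intro n
  induction n using Nat.strong_induction_on with
  | _ n IH =>
    intro A' B' i hi
    constructor
    intro a b sq0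
    obtain ⟨F, hF⟩ := exists_partial_family M f hf n
      (fun j hj => w_relMatchingMap_of_rlp M f hw j (IH j hj)) i hi a b sq0.w n le_rfl
    have hmono : ∀ u : MatchingCat n, Mono u.obj.hom.unop :=
      fun u => @unop_mono_of_epi _ _ _ _ u.obj.hom u.property.2
    have Fcongr : ∀ (j₀ : ℕ) (h1 h1' : j₀ < n) (φ₁ φ₂ : (⦋j₀⦌ : SimplexCategory) ⟶ ⦋n⦌)
        (h : φ₁ = φ₂) (hφ₁ : Mono φ₁) (hφ₂ : Mono φ₂),
        F j₀ h1 φ₁ hφ₁ = F j₀ h1' φ₂ hφ₂ := by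
      intro j₀ h1 h1' φ₁ φ₂ h hφ₁ hφ₂
      cases h
      rfl
    let l : B' ⟶ matchingObject n X := limit.lift (matchingDiagram n X)
      { pt := B'
        π :=
          { app := fun u => F u.obj.right.unop.len u.property.1 u.obj.hom.unop (hmono u)
            naturality := fun u u' g => by
              dsimp [matchingDiagram]
              erw [Category.id_comp]
              have hw' : g.hom.right.unop ≫ u.obj.hom.unop = u'.obj.hom.unop := by
                rw [← unop_comp, Under.w g.hom]
              have hg : Mono (g.hom.right.unop) := by
                have : Mono (g.hom.right.unop ≫ u.obj.hom.unop) := by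
                  rw [hw']; exact hmono u'
                exact mono_of_mono _ (u.obj.hom.unop)
              have hc : Mono (g.hom.right.unop ≫ u.obj.hom.unop) := by
                rw [hw']; exact hmono u'
              have h3 := (hF u.obj.right.unop.len u.property.1 u.obj.hom.unop (hmono u)
                u.property.1).2.2 u'.obj.right.unop.len u'.property.1 g.hom.right.unop hg hc
              rw [show X.map (g.hom.right.unop).op = X.map g.hom.right by rw [Quiver.Hom.op_unop]] at h3
              exact (Fcongr _ u'.property.1 u'.property.1 _ _ hw'.symm (hmono u') hc).trans
                h3.symm } }
    have hl : ∀ u : MatchingCat n, l ≫ limit.π (matchingDiagram n X) u =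
        F u.obj.right.unop.len u.property.1 u.obj.hom.unop (hmono u) :=
      fun u => limit.lift_π _ _
    refine ⟨⟨⟨l, ?_, ?_⟩⟩⟩
    · apply limit.hom_ext
      intro u
      erw [Category.assoc, hl]
      have := (hF u.obj.right.unop.len u.property.1 u.obj.hom.unop (hmono u) u.property.1).1
      erw [this]
      rfl
    · apply limit.hom_ext
      intro u
      erw [Category.assoc, matchingObjMap_π, ← Category.assoc, hl]
      erw [(hF u.obj.right.unop.len u.property.1 u.obj.hom.unop (hmono u) u.property.1).2.1]
      rfl

/-- A Reedy fibration which is a level weak equivalence is a levelwise trivial fibration. -/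
lemma rlpCof_app (M : ModelStructure C) {X Y : SimplicialObject C} (f : X ⟶ Y)
    (hf : ReedyFibration M f) (hw : levelWE M f) (n : ℕ) :
    RLPCof M (f.app (op ⦋n⦌)) := by
  have h1 := rlpCof_matchingObjMap M f hf hw n
  have h2 : M.W (relMatchingMap n f) := w_relMatchingMap_of_rlp M f hw n h1
  have h3 : RLPCof M (relMatchingMap n f) := rlpCof_of_trivFib M (hf n) h2
  have h4 : RLPCof M (pullback.fst (matchingMap n Y) (matchingObjMap n f)) :=
    rlpCof_pullback_fst M _ _ h1
  have h5 := rlpCof_comp M h3 h4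
  rwa [show relMatchingMap n f ≫ pullback.fst _ _ = f.app (op ⦋n⦌) from
    pullback.lift_fst _ _ _] at h5

end AuxKey

open CategoryTheory Limits Simplicial Opposite in
/-- For a model category `C` satisfying the Realization Axiom, a map in `sC` is
a Reedy trivial fibration (a Reedy fibration and a level weak equivalence) if
and only if it is an equifibered Reedy fibration which is also a realization
weak equivalence. -/
theorem reedy_trivFib_iff_equifibered_realizationWE {C : Type u} [Category.{v} C]
    [HasLimitsOfSize.{0,0} C] [HasColimitsOfSize.{0,0} C]
    (M : ModelStructure C) (hM : RealizationAxiom M)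
    {X Y : SimplicialObject C} (f : X ⟶ Y) :
    (ReedyFibration M f ∧ levelWE M f) ↔
      (EquifiberedReedyFibration M f ∧ RealizationWE M f) := by
  constructor
  · rintro ⟨hfib, hlw⟩
    refine ⟨⟨hfib, ?_⟩, ?_⟩
    · intro m i
      have hsnd : RLPCof M (pullback.snd (f.app (op ⦋m⦌)) (Y.δ i)) :=
        rlpCof_pullback_snd M _ _ (rlpCof_app M f hfib hlw m)
      have hW := (trivFib_of_rlpCof M hsnd).2
      refine M.w_cancel_right _ _ hW ?_
      rw [show equifiberedMap f m i ≫ pullback.snd _ _ = f.app (op ⦋m + 1⦌) from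
        pullback.lift_snd _ _ _]
      exact hlw _
    · intro Z
      have : IsIso ((reedyHo M).map f) :=
        Localization.inverts (levelWE M).Q (levelWE M) f hlw
      constructor
      · intro g₁ g₂ h
        simpa using congrArg (fun t => inv ((reedyHo M).map f) ≫ t) h
      · intro g
        exact ⟨inv ((reedyHo M).map f) ≫ g, by simp⟩
  · rintro ⟨heq, hreal⟩
    exact ⟨heq.1, hM f heq hreal⟩
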